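/- For every n ∈ ℕ, setting m = t_2(n) (which is a nonzero integer) and n' = n + (-1)^{ν₂(m) + (m - 2^{ν₂(m)})/2^{ν₂(m)+1}}·2^{ν₂(m)+1}, one has n' ≥ 0 and t_2(n') = -t_2(n). -/

import Mathlib

/-- The generating function `T(x) = ∑ (-1)^{s₂(n)} xⁿ = ∏ (1 - x^{2^j})`
of the Prouhet–Thue–Morse sequence. -/
noncomputable def T : PowerSeries ℤ :=
  PowerSeries.mk fun n => (-1) ^ (Nat.digits 2 n).sum

/-- `t₂` extended to integer indices by `0` for negative indices. -/
noncomputable def t2Z (x : ℤ) : ℤ :=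
  if x < 0 then 0 else PowerSeries.coeff (R := ℤ) x.toNat (T ^ 2)

noncomputable def cc (n : ℕ) : ℤ := PowerSeries.coeff (R := ℤ) n T
noncomputable def tt (n : ℕ) : ℤ := PowerSeries.coeff (R := ℤ) n (T ^ 2)

lemma ttc {a b : ℕ} (h : a = b) : tt a = tt b := by rw [h]

lemma cc_def (n : ℕ) : cc n = (-1) ^ (Nat.digits 2 n).sum := by
  simp [cc, T]

lemma cc_zero : cc 0 = 1 := by simp [cc_def]

lemma cc_even (a : ℕ) : cc (2 * a) = cc a := by
  rcases Nat.eq_zero_or_pos a with rfl | ha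
  · norm_num
  rw [cc_def, cc_def, Nat.digits_def' (by norm_num : (1:ℕ) < 2) (by omega)]
  have h1 : 2 * a % 2 = 0 := by omega
  have h2 : 2 * a / 2 = a := by omega
  rw [h1, h2, List.sum_cons, zero_add]

lemma cc_odd (a : ℕ) : cc (2 * a + 1) = -cc a := by
  rw [cc_def, cc_def, Nat.digits_def' (by norm_num : (1:ℕ) < 2) (by omega)]
  have h1 : (2 * a + 1) % 2 = 1 := by omega
  have h2 : (2 * a + 1) / 2 = a := by omega
  rw [h1, h2, List.sum_cons, pow_add, pow_one]
  ring

lemma tt_sum (N : ℕ) : tt N = ∑ i ∈ Finset.range (N + 1), cc i * cc (N - i) := by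
  rw [tt, sq, PowerSeries.coeff_mul,
    Finset.Nat.sum_antidiagonal_eq_sum_range_succ_mk]
  rfl

lemma sum_split (f : ℕ → ℤ) (n : ℕ) :
    ∑ i ∈ Finset.range (2 * n), f i =
      (∑ a ∈ Finset.range n, f (2 * a)) + ∑ a ∈ Finset.range n, f (2 * a + 1) := by
  induction n with
  | zero => simp
  | succ n ih =>
      rw [show 2 * (n + 1) = 2 * n + 1 + 1 from by ring, Finset.sum_range_succ,
        Finset.sum_range_succ, ih, Finset.sum_range_succ, Finset.sum_range_succ]
      ring

lemma tt_zero : tt 0 = 1 := by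
  rw [tt_sum]; simp [cc_zero]

lemma tt_odd (n : ℕ) : tt (2 * n + 1) = -2 * tt n := by
  rw [tt_sum, show 2 * n + 1 + 1 = 2 * (n + 1) from by ring,
    sum_split (fun i => cc i * cc (2 * n + 1 - i)) (n + 1)]
  have h1 : ∀ a ∈ Finset.range (n + 1),
      cc (2 * a) * cc (2 * n + 1 - 2 * a) = -(cc a * cc (n - a)) := by
    intro a ha
    have hle : a ≤ n := by have := Finset.mem_range.mp ha; omega
    rw [cc_even, show 2 * n + 1 - 2 * a = 2 * (n - a) + 1 from by omega, cc_odd]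
    ring
  have h2 : ∀ a ∈ Finset.range (n + 1),
      cc (2 * a + 1) * cc (2 * n + 1 - (2 * a + 1)) = -(cc a * cc (n - a)) := by
    intro a ha
    have hle : a ≤ n := by have := Finset.mem_range.mp ha; omega
    rw [cc_odd, show 2 * n + 1 - (2 * a + 1) = 2 * (n - a) from by omega, cc_even]
    ring
  rw [Finset.sum_congr rfl h1, Finset.sum_congr rfl h2, tt_sum, Finset.sum_neg_distrib]
  ring

lemma tt_even (n : ℕ) : tt (2 * n + 2) = tt (n + 1) + tt n := by
  rw [tt_sum, show 2 * n + 2 + 1 = 2 * (n + 1) + 1 from by ring, Finset.sum_range_succ,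
    sum_split (fun i => cc i * cc (2 * n + 2 - i)) (n + 1)]
  have h1 : ∀ a ∈ Finset.range (n + 1),
      cc (2 * a) * cc (2 * n + 2 - 2 * a) = cc a * cc (n + 1 - a) := by
    intro a ha
    have hle : a ≤ n := by have := Finset.mem_range.mp ha; omega
    rw [cc_even, show 2 * n + 2 - 2 * a = 2 * (n + 1 - a) from by omega, cc_even]
  have h2 : ∀ a ∈ Finset.range (n + 1),
      cc (2 * a + 1) * cc (2 * n + 2 - (2 * a + 1)) = cc a * cc (n - a) := by
    intro a ha
    have hle : a ≤ n := by have := Finset.mem_range.mp ha; omega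
    rw [cc_odd, show 2 * n + 2 - (2 * a + 1) = 2 * (n - a) + 1 from by omega, cc_odd]
    ring
  have h3 : cc (2 * (n + 1)) * cc (2 * n + 2 - 2 * (n + 1)) = cc (n + 1) * cc 0 := by
    rw [show 2 * n + 2 - 2 * (n + 1) = 0 from by omega, cc_even]
  have h5 : tt (n + 1) = (∑ a ∈ Finset.range (n + 1), cc a * cc (n + 1 - a))
      + cc (n + 1) * cc 0 := by
    rw [tt_sum, Finset.sum_range_succ, show n + 1 - (n + 1) = 0 from by omega]
  rw [Finset.sum_congr rfl h1, Finset.sum_congr rfl h2, h3, h5, ← tt_sum]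
  ring

lemma tt_even_idx_odd : ∀ n : ℕ, Odd (tt (2 * n)) := by
  intro n
  induction n using Nat.strong_induction_on with
  | _ n IH =>
  rcases Nat.eq_zero_or_pos n with rfl | hn
  · rw [show 2 * 0 = 0 from rfl, tt_zero]; exact odd_one
  obtain ⟨p, hp⟩ : ∃ p, n = p + 1 := ⟨n - 1, by omega⟩
  subst hp
  rw [show 2 * (p + 1) = 2 * p + 2 from by ring, tt_even]
  rcases Nat.even_or_odd (p + 1) with ⟨m, hm⟩ | ⟨m, hm⟩
  · have hm1 : 1 ≤ m := by omega
    have hodd : Odd (tt (p + 1)) := by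
      rw [ttc (show p + 1 = 2 * m from by omega)]; exact IH m (by omega)
    have heven : Even (tt p) := by
      rw [(ttc (show p = 2 * (m - 1) + 1 from by omega)).trans (tt_odd (m - 1))]
      exact ⟨-tt (m - 1), by ring⟩
    exact hodd.add_even heven
  · have heven : Even (tt (p + 1)) := by
      rw [(ttc (show p + 1 = 2 * m + 1 from by omega)).trans (tt_odd m)]
      exact ⟨-tt m, by ring⟩
    have hodd : Odd (tt p) := by
      rw [ttc (show p = 2 * m from by omega)]; exact IH m (by omega)
    rw [add_comm]
    exact hodd.add_even heven

lemma tt_4k2 (k : ℕ) : tt (4 * k + 2) = -tt (4 * k) := by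
  rcases Nat.eq_zero_or_pos k with rfl | hk
  · have h1 : tt 1 = -2 * tt 0 := (ttc (by norm_num)).symm.trans (tt_odd 0)
    have h2 : tt 2 = tt 1 + tt 0 := (ttc (by norm_num)).symm.trans (tt_even 0)
    have h3 : tt (4 * 0 + 2) = tt 2 := ttc (by norm_num)
    have h4 : tt (4 * 0) = tt 0 := ttc (by norm_num)
    rw [h3, h4, h2, h1, tt_zero]; norm_num
  obtain ⟨p, hp⟩ : ∃ p, k = p + 1 := ⟨k - 1, by omega⟩
  subst hp
  have e1 : tt (4 * (p + 1) + 2) = tt (2 * p + 2 + 1) + tt (2 * p + 2) :=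
    (ttc (by ring)).trans (tt_even (2 * p + 2))
  have e2 : tt (4 * (p + 1)) = tt (2 * p + 1 + 1) + tt (2 * p + 1) :=
    (ttc (by ring)).trans (tt_even (2 * p + 1))
  have e3 : tt (2 * p + 2 + 1) = -2 * tt (p + 1) :=
    (ttc (by ring)).trans (tt_odd (p + 1))
  have e4 : tt (2 * p + 1) = -2 * tt p := tt_odd p
  have e5 : tt (2 * p + 2) = tt (p + 1) + tt p := tt_even p
  have e6 : tt (2 * p + 1 + 1) = tt (p + 1) + tt p :=
    (ttc (by ring)).trans (tt_even p)
  rw [e1, e2, e3, e4, e5]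
  ring

lemma tt_ne_zero : ∀ n : ℕ, tt n ≠ 0 := by
  intro n
  induction n using Nat.strong_induction_on with
  | _ n IH =>
  rcases Nat.even_or_odd n with ⟨k, hk⟩ | ⟨k, hk⟩
  · have hodd : Odd (tt n) := by
      rw [ttc (show n = 2 * k from by omega)]; exact tt_even_idx_odd k
    have := Int.odd_iff.mp hodd
    omega
  · rw [(ttc (show n = 2 * k + 1 from by omega)).trans (tt_odd k)]
    have := IH k (by omega)
    intro h
    apply this
    omega

lemma tt_4k_mod : ∀ k : ℕ, tt (4 * k) % 4 = 1 := by
  intro k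
  induction k using Nat.strong_induction_on with
  | _ k IH =>
  rcases Nat.eq_zero_or_pos k with rfl | hk
  · rw [(ttc (by norm_num)).trans tt_zero]; norm_num
  obtain ⟨p, hp⟩ : ∃ p, k = p + 1 := ⟨k - 1, by omega⟩
  have key : tt (4 * k) = tt k - tt (k - 1) := by
    subst hp
    have e2 : tt (4 * (p + 1)) = tt (2 * p + 1 + 1) + tt (2 * p + 1) :=
      (ttc (by ring)).trans (tt_even (2 * p + 1))
    have e4 : tt (2 * p + 1) = -2 * tt p := tt_odd p
    have e6 : tt (2 * p + 1 + 1) = tt (p + 1) + tt p :=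
      (ttc (by ring)).trans (tt_even p)
    rw [e2, e4, e6, show p + 1 - 1 = p from by omega]
    ring
  rcases Nat.even_or_odd k with ⟨j, hj⟩ | ⟨j, hj⟩
  · -- k = 2j, j ≥ 1
    have hj1 : 1 ≤ j := by omega
    have h2 : tt (k - 1) = -2 * tt (j - 1) :=
      (ttc (by omega)).trans (tt_odd (j - 1))
    rcases Nat.even_or_odd j with ⟨i, hi⟩ | ⟨i, hi⟩
    · have hi1 : 1 ≤ i := by omega
      have hA : tt k = tt (4 * i) := ttc (by omega)
      have hB : tt (4 * i) % 4 = 1 := IH i (by omega)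
      have hC : tt (j - 1) = -2 * tt (i - 1) :=
        (ttc (by omega)).trans (tt_odd (i - 1))
      omega
    · have hA : tt k = -tt (4 * i) := (ttc (by omega)).trans (tt_4k2 i)
      have hB : tt (4 * i) % 4 = 1 := IH i (by omega)
      have hC : tt (j - 1) = tt (2 * i) := ttc (by omega)
      have hD := Int.odd_iff.mp (tt_even_idx_odd i)
      omega
  · -- k = 2j+1
    have h2 : tt k = -2 * tt j := (ttc (by omega)).trans (tt_odd j)
    rcases Nat.even_or_odd j with ⟨i, hi⟩ | ⟨i, hi⟩
    · have hA : tt j = tt (2 * i) := ttc (by omega)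
      have hB := Int.odd_iff.mp (tt_even_idx_odd i)
      have hC : tt (k - 1) = tt (4 * i) := ttc (by omega)
      have hD : tt (4 * i) % 4 = 1 := IH i (by omega)
      omega
    · have hA : tt j = -2 * tt i := (ttc (by omega)).trans (tt_odd i)
      have hB : tt (k - 1) = -tt (4 * i) := (ttc (by omega)).trans (tt_4k2 i)
      have hC : tt (4 * i) % 4 = 1 := IH i (by omega)
      omega

lemma t2Z_coe (a : ℕ) : t2Z (a : ℤ) = tt a := by
  simp [t2Z, tt]

lemma t2Z_two_mul_add_one (x : ℤ) (hx : 0 ≤ x) : t2Z (2 * x + 1) = -2 * t2Z x := by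
  have h1 : ¬(2 * x + 1 < 0) := by omega
  have h2 : ¬(x < 0) := by omega
  simp only [t2Z, if_neg h1, if_neg h2]
  have h3 : (2 * x + 1).toNat = 2 * x.toNat + 1 := by omega
  rw [h3]
  exact tt_odd x.toNat

lemma neg_one_pow_natAbs_eq {a b : ℤ} (h : a % 2 = b % 2) :
    (-1 : ℤ) ^ a.natAbs = (-1 : ℤ) ^ b.natAbs := by
  rcases Int.even_or_odd a with ha | ha
  · have ha' := Int.even_iff.mp ha
    have hb : Even b := Int.even_iff.mpr (by omega)
    rw [Even.neg_one_pow (Int.natAbs_even.mpr ha), Even.neg_one_pow (Int.natAbs_even.mpr hb)]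
  · have ha' := Int.odd_iff.mp ha
    have hb : Odd b := Int.odd_iff.mpr (by omega)
    rw [Odd.neg_one_pow (Int.natAbs_odd.mpr ha), Odd.neg_one_pow (Int.natAbs_odd.mpr hb)]

lemma main_lemma : ∀ n : ℕ, tt n ≠ 0 ∧ ∀ (j : ℤ) (v : ℕ), tt n = (2 * j + 1) * 2 ^ v →
    0 ≤ (n : ℤ) + (-1 : ℤ) ^ (((v : ℤ) + j).natAbs) * 2 ^ (v + 1) ∧
    t2Z ((n : ℤ) + (-1 : ℤ) ^ (((v : ℤ) + j).natAbs) * 2 ^ (v + 1)) = -tt n := by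
  intro n
  induction n using Nat.strong_induction_on with
  | _ n IH =>
  rcases Nat.even_or_odd n with ⟨k, hk⟩ | ⟨k, hk⟩
  · -- n even
    have hodd : Odd (tt n) := by
      rw [ttc (show n = 2 * k from by omega)]; exact tt_even_idx_odd k
    have hodd' := Int.odd_iff.mp hodd
    refine ⟨by intro h; omega, ?_⟩
    intro j v hjv
    have hv : v = 0 := by
      by_contra hv
      obtain ⟨w, hw⟩ := Nat.exists_eq_succ_of_ne_zero hv
      have heven : Even (tt n) := ⟨(2 * j + 1) * 2 ^ w, by rw [hjv, hw, pow_succ]; ring⟩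
      have := Int.even_iff.mp heven
      omega
    subst hv
    have hjn : tt n = 2 * j + 1 := by rw [hjv]; ring
    rcases Nat.even_or_odd k with ⟨i, hi⟩ | ⟨i, hi⟩
    · -- n = 4i
      have h1' : tt n % 4 = 1 := by
        rw [ttc (show n = 4 * i from by omega)]; exact tt_4k_mod i
      have hε : (-1 : ℤ) ^ ((((0:ℕ) : ℤ) + j).natAbs) = 1 := by
        apply Even.neg_one_pow
        rw [Int.natAbs_even, Int.even_iff]
        push_cast
        omega
      rw [hε]
      have harg : (n : ℤ) + 1 * 2 ^ (0 + 1) = ((4 * i + 2 : ℕ) : ℤ) := by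
        push_cast; omega
      rw [harg]
      refine ⟨by positivity, ?_⟩
      rw [t2Z_coe, tt_4k2 i, ttc (show n = 4 * i from by omega)]
    · -- n = 4i+2
      have h1 : tt (4 * i) % 4 = 1 := tt_4k_mod i
      have h2 : tt n = -tt (4 * i) := (ttc (by omega)).trans (tt_4k2 i)
      have hε : (-1 : ℤ) ^ ((((0:ℕ) : ℤ) + j).natAbs) = -1 := by
        apply Odd.neg_one_pow
        rw [Int.natAbs_odd, Int.odd_iff]
        push_cast
        omega
      rw [hε]
      have harg : (n : ℤ) + -1 * 2 ^ (0 + 1) = ((4 * i : ℕ) : ℤ) := by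
        push_cast; omega
      rw [harg]
      refine ⟨by positivity, ?_⟩
      rw [t2Z_coe, h2]
      ring
  · -- n odd, n = 2k+1
    have hrec : tt n = -2 * tt k := (ttc (show n = 2 * k + 1 from by omega)).trans (tt_odd k)
    obtain ⟨hk0, hk1⟩ := IH k (by omega)
    refine ⟨by intro h; rw [h] at hrec; apply hk0; omega, ?_⟩
    intro j v hjv
    have hv : v ≠ 0 := by
      intro hv
      subst hv
      rw [pow_zero, mul_one] at hjv
      omega
    obtain ⟨w, rfl⟩ : ∃ w, v = w + 1 := ⟨v - 1, by omega⟩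
    have hk' : tt k = (2 * (-(j + 1)) + 1) * 2 ^ w := by
      have h2 : -2 * tt k = (2 * j + 1) * 2 ^ (w + 1) := by rw [← hrec]; exact hjv
      have h3 : (2 : ℤ) * tt k = 2 * ((2 * (-(j + 1)) + 1) * 2 ^ w) := by
        linear_combination -h2
      exact mul_left_cancel₀ (by norm_num : (2:ℤ) ≠ 0) h3
    obtain ⟨hge, heq⟩ := hk1 (-(j + 1)) w hk'
    have hεeq : (-1 : ℤ) ^ ((((w + 1 : ℕ) : ℤ) + j).natAbs)
        = (-1 : ℤ) ^ ((((w : ℕ) : ℤ) + -(j + 1)).natAbs) := by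
      apply neg_one_pow_natAbs_eq
      push_cast
      omega
    rw [hεeq]
    set E : ℤ := (-1 : ℤ) ^ ((((w : ℕ) : ℤ) + -(j + 1)).natAbs) with hE
    have harg : (n : ℤ) + E * 2 ^ (w + 1 + 1)
        = 2 * ((k : ℤ) + E * 2 ^ (w + 1)) + 1 := by
      have hcast : (n : ℤ) = 2 * (k : ℤ) + 1 := by omega
      rw [hcast, pow_succ]
      ring
    rw [harg]
    refine ⟨by linarith, ?_⟩
    rw [t2Z_two_mul_add_one _ hge, heq, hrec]
    ring

lemma pv_eq (j : ℤ) (v : ℕ) : padicValInt 2 ((2 * j + 1) * 2 ^ v) = v := by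
  show padicValNat 2 ((2 * j + 1) * 2 ^ v).natAbs = v
  rw [Int.natAbs_mul, Int.natAbs_pow]
  have hodd : ¬(2 ∣ (2 * j + 1).natAbs) := by omega
  have h1 : (2 * j + 1).natAbs ≠ 0 := by omega
  rw [show (2:ℤ).natAbs = 2 from rfl, padicValNat.mul h1 (by positivity),
    padicValNat.eq_zero_of_not_dvd hodd, padicValNat.prime_pow, zero_add]

lemma decomp (m : ℤ) (hm : m ≠ 0) : ∃ (j : ℤ) (v : ℕ), m = (2 * j + 1) * 2 ^ v := by
  obtain ⟨N, hN⟩ : ∃ N, m.natAbs = N := ⟨m.natAbs, rfl⟩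
  induction N using Nat.strong_induction_on generalizing m with
  | _ N IH =>
  rcases Int.even_or_odd m with ⟨r, hr⟩ | ⟨r, hr⟩
  · have hrne : r ≠ 0 := by intro h; apply hm; omega
    obtain ⟨j, v, hjv⟩ := IH r.natAbs (by omega) r hrne rfl
    exact ⟨j, v + 1, by rw [show m = 2 * r from by omega, hjv, pow_succ]; ring⟩
  · exact ⟨r, 0, by rw [pow_zero, mul_one]; omega⟩

theorem stmt18 (n : ℕ) (m : ℤ) (hm : m = PowerSeries.coeff (R := ℤ) n (T ^ 2)) :
    m ≠ 0 ∧
    ∀ n' : ℤ,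
      n' = (n : ℤ) +
          (-1 : ℤ) ^
              (((padicValInt 2 m : ℤ) +
                  (m - 2 ^ padicValInt 2 m) / 2 ^ (padicValInt 2 m + 1)).natAbs) *
            2 ^ (padicValInt 2 m + 1) →
      0 ≤ n' ∧ t2Z n' = -m := by
  have hm' : m = tt n := hm
  obtain ⟨h0, h1⟩ := main_lemma n
  have hmne : m ≠ 0 := by rw [hm']; exact h0
  refine ⟨hmne, ?_⟩
  obtain ⟨j, v, hjv⟩ := decomp m hmne
  have hpv : padicValInt 2 m = v := by rw [hjv]; exact pv_eq j v
  have hdiv : (m - 2 ^ v) / 2 ^ (v + 1) = j := by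
    have h2 : m - 2 ^ v = j * 2 ^ (v + 1) := by
      rw [hjv, pow_succ]; ring
    rw [h2, Int.mul_ediv_cancel _ (by positivity)]
  intro n' hn'
  rw [hpv, hdiv] at hn'
  obtain ⟨hge, heq⟩ := h1 j v (by rw [← hm']; exact hjv)
  subst hn'
  exact ⟨hge, by rw [heq, hm']⟩
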